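/- Let H be a Hilbert space, ψ ∈ H a unit vector, and let X_A, Z_A, X_B, Z_B be unitary operators such that [X_A, X_B] = [X_A, Z_B] = [Z_A, X_B] = [Z_A, Z_B] = 0, with ‖(X_A − X_B)ψ‖ ≤ δ₁, ‖(Z_A − Z_B)ψ‖ ≤ δ₁, and ‖(Z_A X_B + X_A Z_A)ψ‖ ≤ δ₂. Then |⟨ψ, Z_A ψ⟩| ≤ (δ₁ + δ₂)/2. -/

import Mathlib

open ContinuousLinearMap

lemma robust_junk_aux {H : Type*} [NormedAddCommGroup H] [InnerProductSpace ℂ H]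
    [CompleteSpace H] (U : H →L[ℂ] H)
    (hU : (ContinuousLinearMap.adjoint U) ∘L U = 1) (x : H) : ‖U x‖ = ‖x‖ := by
  have h2 : (ContinuousLinearMap.adjoint U) (U x) = x := by
    have := congrArg (fun T : H →L[ℂ] H => T x) hU
    simpa using this
  have h : (inner ℂ (U x) (U x) : ℂ) = inner ℂ x x := by
    rw [← ContinuousLinearMap.adjoint_inner_right, h2]
  rw [@norm_eq_sqrt_re_inner ℂ, @norm_eq_sqrt_re_inner ℂ, h]

/-- Robust junk-state overlap estimate. -/
theorem robust_junk_overlap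
    {H : Type*} [NormedAddCommGroup H] [InnerProductSpace ℂ H] [CompleteSpace H]
    (ψ : H) (hψ : ‖ψ‖ = 1)
    (XA ZA XB ZB : H →L[ℂ] H)
    (hXAu1 : (ContinuousLinearMap.adjoint XA) ∘L XA = 1)
    (hXAu2 : XA ∘L (ContinuousLinearMap.adjoint XA) = 1)
    (hZAu1 : (ContinuousLinearMap.adjoint ZA) ∘L ZA = 1)
    (hZAu2 : ZA ∘L (ContinuousLinearMap.adjoint ZA) = 1)
    (hXBu1 : (ContinuousLinearMap.adjoint XB) ∘L XB = 1)
    (hXBu2 : XB ∘L (ContinuousLinearMap.adjoint XB) = 1)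
    (hZBu1 : (ContinuousLinearMap.adjoint ZB) ∘L ZB = 1)
    (hZBu2 : ZB ∘L (ContinuousLinearMap.adjoint ZB) = 1)
    (hc1 : XA ∘L XB = XB ∘L XA) (hc2 : XA ∘L ZB = ZB ∘L XA)
    (hc3 : ZA ∘L XB = XB ∘L ZA) (hc4 : ZA ∘L ZB = ZB ∘L ZA)
    (δ₁ δ₂ : ℝ)
    (h1 : ‖(XA - XB) ψ‖ ≤ δ₁)
    (h2 : ‖(ZA - ZB) ψ‖ ≤ δ₁)
    (h3 : ‖(ZA ∘L XB + XA ∘L ZA) ψ‖ ≤ δ₂) :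
    ‖(inner ℂ ψ (ZA ψ) : ℂ)‖ ≤ (δ₁ + δ₂) / 2 := by
  set a : ℂ := inner ℂ ψ (ZA ψ) with ha
  set b : ℂ := inner ℂ (XA ψ) (ZA (XB ψ)) with hb
  have hXAψ : ‖XA ψ‖ = 1 := by rw [robust_junk_aux XA hXAu1]; exact hψ
  have hZAXB : ‖ZA (XB ψ)‖ = 1 := by
    rw [robust_junk_aux ZA hZAu1, robust_junk_aux XB hXBu1]; exact hψ
  -- a rewritten via XA
  have haXA : a = inner ℂ (XA ψ) (XA (ZA ψ)) := by
    rw [ha, ← ContinuousLinearMap.adjoint_inner_right]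
    congr 1
    have := congrArg (fun T : H →L[ℂ] H => T (ZA ψ)) hXAu1
    simpa using this.symm
  -- a rewritten via XB
  have haXB : a = inner ℂ (XB ψ) (ZA (XB ψ)) := by
    have hcomm : ZA (XB ψ) = XB (ZA ψ) := by
      have := congrArg (fun T : H →L[ℂ] H => T ψ) hc3
      simpa using this
    rw [ha, hcomm, ← ContinuousLinearMap.adjoint_inner_right]
    congr 1
    have := congrArg (fun T : H →L[ℂ] H => T (ZA ψ)) hXBu1
    simpa using this.symm
  have hA : ‖a + b‖ ≤ δ₂ := by
    have heq : a + b = inner ℂ (XA ψ) ((ZA ∘L XB + XA ∘L ZA) ψ) := by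
      rw [haXA, hb, ← inner_add_right]
      simp [add_comm, inner_add_right]
    calc ‖a + b‖ ≤ ‖XA ψ‖ * ‖(ZA ∘L XB + XA ∘L ZA) ψ‖ := by
          rw [heq]; exact norm_inner_le_norm _ _
      _ ≤ δ₂ := by rw [hXAψ, one_mul]; exact h3
  have hB : ‖b - a‖ ≤ δ₁ := by
    have heq : b - a = inner ℂ ((XA - XB) ψ) (ZA (XB ψ)) := by
      rw [haXB, hb, ← inner_sub_left]
      simp [inner_sub_left]
    calc ‖b - a‖ ≤ ‖(XA - XB) ψ‖ * ‖ZA (XB ψ)‖ := by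
          rw [heq]; exact norm_inner_le_norm _ _
      _ ≤ δ₁ := by rw [hZAXB, mul_one]; exact h1
  have h2a : ‖a + b - (b - a)‖ ≤ δ₂ + δ₁ := (norm_sub_le _ _).trans (add_le_add hA hB)
  have hring : a + b - (b - a) = 2 * a := by ring
  rw [hring, norm_mul] at h2a
  simp only [Complex.norm_ofNat] at h2a
  linarith
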